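/- The assignment g ↦ Pg induces a bijection from the set of (free) homotopy classes of continuous maps S^{n-1} → S^{k-1} to the set of proper homotopy classes of proper continuous maps ℝⁿ → ℝᵏ. -/

import Mathlib

open Classical

/-- The radial extension `Pg` of a map of spheres `g`. -/
noncomputable def radialExt (n k : ℕ)
    (g : Metric.sphere (0 : EuclideanSpace ℝ (Fin n)) 1 →
         Metric.sphere (0 : EuclideanSpace ℝ (Fin k)) 1) :
    EuclideanSpace ℝ (Fin n) → EuclideanSpace ℝ (Fin k) := fun v =>
  if h : v = 0 then 0
  else ‖v‖ • (g ⟨‖v‖⁻¹ • v, by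
    rw [mem_sphere_zero_iff_norm, norm_smul, norm_inv, norm_norm,
      inv_mul_cancel₀ (norm_ne_zero_iff.mpr h)]⟩ : EuclideanSpace ℝ (Fin k))

/-- Two maps `ℝⁿ → ℝᵏ` are properly homotopic if they are joined by a homotopy which
is itself a proper map. -/
def ProperlyHomotopic (n k : ℕ)
    (f₀ f₁ : EuclideanSpace ℝ (Fin n) → EuclideanSpace ℝ (Fin k)) : Prop :=
  ∃ H : unitInterval × EuclideanSpace ℝ (Fin n) → EuclideanSpace ℝ (Fin k),
    Continuous H ∧
    (∀ K : Set (EuclideanSpace ℝ (Fin k)), IsCompact K → IsCompact (H ⁻¹' K)) ∧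
    (∀ v, H (0, v) = f₀ v) ∧ (∀ v, H (1, v) = f₁ v)

/-- Free homotopy of maps of spheres. -/
def SphereHomotopic (n k : ℕ)
    (g₀ g₁ : Metric.sphere (0 : EuclideanSpace ℝ (Fin n)) 1 →
             Metric.sphere (0 : EuclideanSpace ℝ (Fin k)) 1) : Prop :=
  ∃ H : unitInterval × Metric.sphere (0 : EuclideanSpace ℝ (Fin n)) 1 →
        Metric.sphere (0 : EuclideanSpace ℝ (Fin k)) 1,
    Continuous H ∧ (∀ x, H (0, x) = g₀ x) ∧ (∀ x, H (1, x) = g₁ x)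

section Aux
variable {n k : ℕ}
local notation "E" => EuclideanSpace ℝ (Fin n)
local notation "F" => EuclideanSpace ℝ (Fin k)

lemma norm_radialExt (g : Metric.sphere (0 : E) 1 → Metric.sphere (0 : F) 1)
    (v : E) : ‖radialExt n k g v‖ = ‖v‖ := by
  unfold radialExt
  by_cases h : v = 0
  · simp [h]
  · rw [dif_neg h, norm_smul, norm_norm]
    have : ‖(g ⟨‖v‖⁻¹ • v, by
      rw [mem_sphere_zero_iff_norm, norm_smul, norm_inv, norm_norm,
        inv_mul_cancel₀ (norm_ne_zero_iff.mpr h)]⟩ : F)‖ = 1 :=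
      mem_sphere_zero_iff_norm.mp (Subtype.mem _)
    rw [this, mul_one]

/-- Master continuity lemma for radial-type maps. -/
lemma cont_aux {X : Type*} [TopologicalSpace X]
    (G : X × Metric.sphere (0 : E) 1 → Metric.sphere (0 : F) 1) (hG : Continuous G) :
    Continuous (fun p : X × E => if h : p.2 = 0 then (0 : F) else
      ‖p.2‖ • (G (p.1, ⟨‖p.2‖⁻¹ • p.2, by
        rw [mem_sphere_zero_iff_norm, norm_smul, norm_inv, norm_norm,
          inv_mul_cancel₀ (norm_ne_zero_iff.mpr h)]⟩) : F)) := by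
  set Φ := fun p : X × E => if h : p.2 = 0 then (0 : F) else
      ‖p.2‖ • (G (p.1, ⟨‖p.2‖⁻¹ • p.2, by
        rw [mem_sphere_zero_iff_norm, norm_smul, norm_inv, norm_norm,
          inv_mul_cancel₀ (norm_ne_zero_iff.mpr h)]⟩) : F) with hΦ
  have hnorm : ∀ p : X × E, ‖Φ p‖ ≤ ‖p.2‖ := by
    intro p
    by_cases h : p.2 = 0
    · simp [hΦ, h]
    · rw [hΦ]
      simp only [dif_neg h]
      simp [norm_smul]
  rw [continuous_iff_continuousAt]
  rintro ⟨x, v⟩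
  by_cases hv : v = 0
  · subst hv
    have h0 : Φ (x, 0) = 0 := by simp [hΦ]
    rw [ContinuousAt, h0]
    apply squeeze_zero_norm hnorm
    have : Continuous (fun p : X × E => ‖p.2‖) := continuous_snd.norm
    have := this.tendsto (x, (0 : E))
    simpa using this
  · -- v ≠ 0 : continuity on the open set {p | p.2 ≠ 0}
    have hopen : IsOpen {p : X × E | p.2 ≠ 0} :=
      (isOpen_ne : IsOpen {w : E | w ≠ 0}).preimage continuous_snd
    have hco : ContinuousOn Φ {p : X × E | p.2 ≠ 0} := by
      rw [continuousOn_iff_continuous_restrict]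
      have hrestr : Set.domRestrict {p : X × E | p.2 ≠ 0} Φ = fun q =>
          ‖q.1.2‖ • (G (q.1.1, ⟨‖q.1.2‖⁻¹ • q.1.2, by
            rw [mem_sphere_zero_iff_norm, norm_smul, norm_inv, norm_norm,
              inv_mul_cancel₀ (norm_ne_zero_iff.mpr q.2)]⟩) : F) := by
        funext q
        simp only [Set.domRestrict_apply, hΦ, dif_neg q.2]
      rw [hrestr]
      have hval : Continuous fun q : {p : X × E // p.2 ≠ 0} => q.1.2 :=
        continuous_snd.comp continuous_subtype_val
      have hnz : ∀ q : {p : X × E // p.2 ≠ 0}, ‖q.1.2‖ ≠ 0 :=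
        fun q => norm_ne_zero_iff.mpr q.2
      have hsp : Continuous fun q : {p : X × E // p.2 ≠ 0} =>
          (⟨‖q.1.2‖⁻¹ • q.1.2, by
            rw [mem_sphere_zero_iff_norm, norm_smul, norm_inv, norm_norm,
              inv_mul_cancel₀ (norm_ne_zero_iff.mpr q.2)]⟩ : Metric.sphere (0 : E) 1) := by
        apply Continuous.subtype_mk
        exact (hval.norm.inv₀ hnz).smul hval
      exact hval.norm.smul (continuous_subtype_val.comp
        (hG.comp ((continuous_fst.comp continuous_subtype_val).prodMk hsp)))
    exact hco.continuousAt (hopen.mem_nhds hv)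

/-- Properness from norm escape, product domain. -/
lemma proper_escape {H : unitInterval × E → F} (hc : Continuous H)
    (h : ∀ r : ℝ, ∃ S : ℝ, ∀ (t : unitInterval) (v : E), S ≤ ‖v‖ → r < ‖H (t, v)‖) :
    ∀ K : Set F, IsCompact K → IsCompact (H ⁻¹' K) := by
  intro K hK
  obtain ⟨r, hr⟩ := hK.isBounded.subset_closedBall 0
  obtain ⟨S, hS⟩ := h r
  apply IsCompact.of_isClosed_subset
    (isCompact_univ.prod (isCompact_closedBall (0 : E) S))
    (hK.isClosed.preimage hc)
  rintro ⟨t, v⟩ hp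
  refine ⟨Set.mem_univ _, ?_⟩
  simp only [Metric.mem_closedBall, dist_zero_right]
  by_contra hv
  push_neg at hv
  have h1 : r < ‖H (t, v)‖ := hS t v hv.le
  have h2 : ‖H (t, v)‖ ≤ r := by
    have := hr hp
    simpa [Metric.mem_closedBall, dist_zero_right] using this
  linarith

lemma proper_escape' {f : E → F} (hc : Continuous f)
    (h : ∀ r : ℝ, ∃ S : ℝ, ∀ v : E, S ≤ ‖v‖ → r < ‖f v‖) :
    ∀ K : Set F, IsCompact K → IsCompact (f ⁻¹' K) := by
  intro K hK
  obtain ⟨r, hr⟩ := hK.isBounded.subset_closedBall 0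
  obtain ⟨S, hS⟩ := h r
  apply IsCompact.of_isClosed_subset (isCompact_closedBall (0 : E) S)
    (hK.isClosed.preimage hc)
  intro v hp
  simp only [Metric.mem_closedBall, dist_zero_right]
  by_contra hv
  push_neg at hv
  have h1 : r < ‖f v‖ := hS v hv.le
  have h2 : ‖f v‖ ≤ r := by
    have := hr hp
    simpa [Metric.mem_closedBall, dist_zero_right] using this
  linarith

end Aux

section Part12
variable {n k : ℕ}
local notation "E" => EuclideanSpace ℝ (Fin n)
local notation "F" => EuclideanSpace ℝ (Fin k)

lemma radialExt_continuous (g : Metric.sphere (0 : E) 1 → Metric.sphere (0 : F) 1)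
    (hg : Continuous g) : Continuous (radialExt n k g) := by
  have h := cont_aux (X := Unit) (fun p => g p.2) (hg.comp continuous_snd)
  have h2 : Continuous fun v : E => ((), v) :=
    continuous_const.prodMk continuous_id
  have := h.comp h2
  convert this using 1
  funext v
  rfl

lemma radialExt_proper (g : Metric.sphere (0 : E) 1 → Metric.sphere (0 : F) 1)
    (hg : Continuous g) :
    ∀ K : Set F, IsCompact K → IsCompact (radialExt n k g ⁻¹' K) := by
  apply proper_escape' (radialExt_continuous g hg)
  intro r
  refine ⟨max r 0 + 1, fun v hv => ?_⟩
  rw [norm_radialExt]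
  have := le_max_left r 0
  linarith

lemma part2 (g₀ g₁ : Metric.sphere (0 : E) 1 → Metric.sphere (0 : F) 1)
    (hH : SphereHomotopic n k g₀ g₁) :
    ProperlyHomotopic n k (radialExt n k g₀) (radialExt n k g₁) := by
  obtain ⟨G, hGc, hG0, hG1⟩ := hH
  refine ⟨fun p => if h : p.2 = 0 then (0 : F) else
      ‖p.2‖ • (G (p.1, ⟨‖p.2‖⁻¹ • p.2, by
        rw [mem_sphere_zero_iff_norm, norm_smul, norm_inv, norm_norm,
          inv_mul_cancel₀ (norm_ne_zero_iff.mpr h)]⟩) : F), ?_, ?_, ?_, ?_⟩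
  · exact cont_aux G hGc
  · apply proper_escape (cont_aux G hGc)
    intro r
    refine ⟨max r 0 + 1, fun t v hv => ?_⟩
    by_cases h : v = 0
    · exfalso; rw [h] at hv; simp at hv; have := le_max_right r 0; linarith
    · simp only [dif_neg h]
      rw [norm_smul]
      simp only [norm_norm, norm_eq_of_mem_sphere, mul_one]
      have := le_max_left r 0
      linarith
  · intro v
    by_cases h : v = 0
    · simp [h, radialExt]
    · simp only [dif_neg h, hG0, radialExt]
  · intro v
    by_cases h : v = 0
    · simp [h, radialExt]
    · simp only [dif_neg h, hG1, radialExt]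

lemma ProperlyHomotopic.symm' {f₀ f₁ : E → F}
    (h : ProperlyHomotopic n k f₀ f₁) : ProperlyHomotopic n k f₁ f₀ := by
  obtain ⟨H, hc, hp, h0, h1⟩ := h
  refine ⟨fun p => H (unitInterval.symm p.1, p.2), ?_, ?_, ?_, ?_⟩
  · exact hc.comp ((unitInterval.continuous_symm.comp continuous_fst).prodMk continuous_snd)
  · intro K hK
    apply IsCompact.of_isClosed_subset
      (isCompact_univ.prod ((hp K hK).image continuous_snd))
      (hK.isClosed.preimage (hc.comp
        ((unitInterval.continuous_symm.comp continuous_fst).prodMk continuous_snd)))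
    rintro ⟨t, v⟩ hptv
    exact ⟨Set.mem_univ _, ⟨(unitInterval.symm t, v), hptv, rfl⟩⟩
  · intro v; simp [h1 v]
  · intro v; simp [h0 v]

lemma ProperlyHomotopic.trans' {f₀ f₁ f₂ : E → F}
    (h : ProperlyHomotopic n k f₀ f₁) (h' : ProperlyHomotopic n k f₁ f₂) :
    ProperlyHomotopic n k f₀ f₂ := by
  obtain ⟨H, hc, hp, h0, h1⟩ := h
  obtain ⟨H', hc', hp', h0', h1'⟩ := h'
  set σ : ℝ → unitInterval := Set.projIcc 0 1 zero_le_one with hσ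
  have hσc : Continuous σ := continuous_projIcc
  set G : unitInterval × E → F := fun p =>
    if (p.1 : ℝ) ≤ 1/2 then H (σ (2 * (p.1 : ℝ)), p.2) else H' (σ (2 * (p.1 : ℝ) - 1), p.2)
    with hG
  have hGc : Continuous G := by
    apply Continuous.if_le
    · exact hc.comp ((hσc.comp (continuous_const.mul
        (continuous_subtype_val.comp continuous_fst))).prodMk continuous_snd)
    · exact hc'.comp ((hσc.comp ((continuous_const.mul
        (continuous_subtype_val.comp continuous_fst)).sub continuous_const)).prodMk
        continuous_snd)
    · exact continuous_subtype_val.comp continuous_fst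
    · exact continuous_const
    · rintro ⟨t, v⟩ ht
      simp only at ht ⊢
      rw [ht]
      norm_num
      have e1 : σ (1 : ℝ) = 1 := by
        rw [hσ]; ext; simp [Set.projIcc]
      have e2 : σ (0 : ℝ) = 0 := by
        rw [hσ]; ext; simp [Set.projIcc]
      rw [e1, e2, h1 v, h0' v]
  refine ⟨G, hGc, ?_, ?_, ?_⟩
  · intro K hK
    apply IsCompact.of_isClosed_subset
      (isCompact_univ.prod (((hp K hK).image continuous_snd).union
        ((hp' K hK).image continuous_snd)))
      (hK.isClosed.preimage hGc)
    rintro ⟨t, v⟩ hptv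
    refine ⟨Set.mem_univ _, ?_⟩
    simp only [Set.mem_preimage, hG] at hptv
    by_cases h : (t : ℝ) ≤ 1/2
    · rw [if_pos h] at hptv
      exact Or.inl ⟨(σ (2 * (t : ℝ)), v), hptv, rfl⟩
    · rw [if_neg h] at hptv
      exact Or.inr ⟨(σ (2 * (t : ℝ) - 1), v), hptv, rfl⟩
  · intro v
    have : ((0 : unitInterval) : ℝ) ≤ 1/2 := by norm_num
    rw [hG]
    have e : σ (2 * ((0 : unitInterval) : ℝ)) = 0 := by
      rw [hσ]; ext; norm_num [Set.projIcc]
    simp only [if_pos this]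
    rw [e]; exact h0 v
  · intro v
    have : ¬ ((1 : unitInterval) : ℝ) ≤ 1/2 := by norm_num
    rw [hG]
    have e : σ (2 * ((1 : unitInterval) : ℝ) - 1) = 1 := by
      rw [hσ]; ext; norm_num [Set.projIcc]
    simp only [if_neg this]
    rw [e]; exact h1' v

end Part12

section Part3
variable {n k : ℕ}
local notation "E" => EuclideanSpace ℝ (Fin n)
local notation "F" => EuclideanSpace ℝ (Fin k)

lemma radialExt_smul (g : Metric.sphere (0 : E) 1 → Metric.sphere (0 : F) 1)
    {c : ℝ} (hc : 0 < c) (x : Metric.sphere (0 : E) 1) :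
    radialExt n k g (c • (x : E)) = c • ((g x : F)) := by
  have hx : ‖(x : E)‖ = 1 := norm_eq_of_mem_sphere x
  have hnorm : ‖c • (x : E)‖ = c := by
    rw [norm_smul, hx, mul_one, Real.norm_eq_abs, abs_of_pos hc]
  have hne : c • (x : E) ≠ 0 := by
    intro h
    rw [h, norm_zero] at hnorm
    exact hc.ne hnorm
  unfold radialExt
  rw [dif_neg hne]
  have harg : (⟨‖c • (x : E)‖⁻¹ • (c • (x : E)), by
      rw [mem_sphere_zero_iff_norm, norm_smul, norm_inv, norm_norm,
        inv_mul_cancel₀ (norm_ne_zero_iff.mpr hne)]⟩ : Metric.sphere (0 : E) 1) = x := by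
    apply Subtype.ext
    simp only
    rw [hnorm, smul_smul, inv_mul_cancel₀ hc.ne', one_smul]
  rw [harg, hnorm]

lemma part3 (g₀ g₁ : Metric.sphere (0 : E) 1 → Metric.sphere (0 : F) 1)
    (hph : ProperlyHomotopic n k (radialExt n k g₀) (radialExt n k g₁)) :
    SphereHomotopic n k g₀ g₁ := by
  obtain ⟨H, hc, hp, h0, h1⟩ := hph
  have hC : IsCompact (H ⁻¹' Metric.closedBall 0 1) :=
    hp _ (isCompact_closedBall 0 1)
  obtain ⟨R₀, hR₀⟩ :=
    ((hC.image continuous_snd).isBounded).subset_closedBall 0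
  set R : ℝ := max R₀ 0 + 1 with hRdef
  have hRpos : 0 < R := by positivity
  have hKey : ∀ (t : unitInterval) (x : Metric.sphere (0 : E) 1),
      1 < ‖H (t, R • (x : E))‖ := by
    intro t x
    by_contra hle
    push_neg at hle
    have hmem : (t, R • (x : E)) ∈ H ⁻¹' Metric.closedBall 0 1 := by
      simp only [Set.mem_preimage, Metric.mem_closedBall, dist_zero_right]
      exact hle
    have : R • (x : E) ∈ Metric.closedBall (0 : E) R₀ :=
      hR₀ ⟨(t, R • (x : E)), hmem, rfl⟩
    rw [Metric.mem_closedBall, dist_zero_right, norm_smul,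
      norm_eq_of_mem_sphere, mul_one, Real.norm_eq_abs, abs_of_pos hRpos] at this
    have : max R₀ 0 + 1 ≤ R₀ := this
    have := le_max_left R₀ 0
    linarith
  have hne : ∀ p : unitInterval × Metric.sphere (0 : E) 1,
      ‖H (p.1, R • (p.2 : E))‖ ≠ 0 := fun p =>
    ne_of_gt (lt_trans zero_lt_one (hKey p.1 p.2))
  refine ⟨fun p => ⟨‖H (p.1, R • (p.2 : E))‖⁻¹ • H (p.1, R • (p.2 : E)), by
    rw [mem_sphere_zero_iff_norm, norm_smul, norm_inv, norm_norm,
      inv_mul_cancel₀ (hne p)]⟩, ?_, ?_, ?_⟩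
  · apply Continuous.subtype_mk
    have hin : Continuous fun p : unitInterval × Metric.sphere (0 : E) 1 =>
        H (p.1, R • (p.2 : E)) :=
      hc.comp (continuous_fst.prodMk
        ((continuous_subtype_val.comp continuous_snd).const_smul R))
    exact (hin.norm.inv₀ hne).smul hin
  · intro x
    apply Subtype.ext
    simp only
    rw [h0, radialExt_smul g₀ hRpos x]
    rw [norm_smul, norm_eq_of_mem_sphere, mul_one, Real.norm_eq_abs,
      abs_of_pos hRpos, smul_smul, inv_mul_cancel₀ hRpos.ne', one_smul]
  · intro x
    apply Subtype.ext
    simp only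
    rw [h1, radialExt_smul g₁ hRpos x]
    rw [norm_smul, norm_eq_of_mem_sphere, mul_one, Real.norm_eq_abs,
      abs_of_pos hRpos, smul_smul, inv_mul_cancel₀ hRpos.ne', one_smul]

end Part3

section Part4
variable {n k : ℕ}
local notation "E" => EuclideanSpace ℝ (Fin n)
local notation "F" => EuclideanSpace ℝ (Fin k)

lemma smul_sub_form (c : ℝ) (v : E) : v - c • v = (1 - c) • v := by
  rw [sub_smul, one_smul]

lemma argEq {R : ℝ} (hR : 0 < R) (v : E) :
    v - (max 0 (‖v‖ - R) / ‖v‖) • v = (R / max R ‖v‖) • v := by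
  rcases le_or_gt ‖v‖ R with h | h
  · rw [max_eq_left (by linarith), max_eq_left h, zero_div, zero_smul, sub_zero,
      div_self hR.ne', one_smul]
  · have hv0 : (0:ℝ) < ‖v‖ := lt_trans hR h
    rw [max_eq_right (by linarith : (0:ℝ) ≤ ‖v‖ - R), max_eq_right h.le, smul_sub_form]
    congr 1
    field_simp
    ring

set_option maxHeartbeats 2000000 in
lemma part4 (f : E → F) (hf : Continuous f)
    (hfp : ∀ K : Set F, IsCompact K → IsCompact (f ⁻¹' K)) :
    ∃ g : Metric.sphere (0 : E) 1 → Metric.sphere (0 : F) 1,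
      Continuous g ∧ ProperlyHomotopic n k (radialExt n k g) f := by
  -- escape property of f
  have hfr : ∀ r : ℝ, ∃ S : ℝ, ∀ w : E, S ≤ ‖w‖ → r < ‖f w‖ := by
    intro r
    obtain ⟨S₀, hS₀⟩ := (hfp _ (isCompact_closedBall (0 : F) r)).isBounded.subset_closedBall 0
    refine ⟨S₀ + 1, fun w hw => ?_⟩
    by_contra hle
    push_neg at hle
    have : w ∈ Metric.closedBall (0 : E) S₀ := hS₀ (by
      simp only [Set.mem_preimage, Metric.mem_closedBall, dist_zero_right]; exact hle)
    rw [Metric.mem_closedBall, dist_zero_right] at this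
    linarith
  -- radius R beyond which ‖f‖ > 1
  obtain ⟨S₁, hS₁⟩ := hfr 1
  set R : ℝ := max S₁ 0 + 1 with hRdef
  have hRpos : 0 < R := by positivity
  have hR : ∀ v : E, R ≤ ‖v‖ → 1 < ‖f v‖ := by
    intro v hv
    apply hS₁
    have := le_max_left S₁ 0
    linarith
  -- bound for f on the ball of radius R
  obtain ⟨M, hM'⟩ := (isCompact_closedBall (0 : E) R).exists_bound_of_continuousOn
    hf.continuousOn
  have hM : ∀ w : E, ‖w‖ ≤ R → ‖f w‖ ≤ M := fun w hw =>
    hM' w (by rwa [Metric.mem_closedBall, dist_zero_right])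
  have hM0 : 0 ≤ M := le_trans (norm_nonneg _) (hM 0 (by simp [hRpos.le]))
  -- the sphere map g
  have hgnorm : ∀ x : Metric.sphere (0 : E) 1, 1 < ‖f (R • (x : E))‖ := by
    intro x
    apply hR
    rw [norm_smul, norm_eq_of_mem_sphere, mul_one, Real.norm_eq_abs, abs_of_pos hRpos]
  have hgne : ∀ x : Metric.sphere (0 : E) 1, ‖f (R • (x : E))‖ ≠ 0 := fun x =>
    ne_of_gt (lt_trans zero_lt_one (hgnorm x))
  refine ⟨fun x => ⟨‖f (R • (x : E))‖⁻¹ • f (R • (x : E)), by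
      rw [mem_sphere_zero_iff_norm, norm_smul, norm_inv, norm_norm,
        inv_mul_cancel₀ (hgne x)]⟩, ?_, ?_⟩
  · apply Continuous.subtype_mk
    have hin : Continuous fun x : Metric.sphere (0 : E) 1 => f (R • (x : E)) :=
      hf.comp (continuous_subtype_val.const_smul R)
    exact (hin.norm.inv₀ hgne).smul hin
  -- the intermediate maps
  set g : Metric.sphere (0 : E) 1 → Metric.sphere (0 : F) 1 := fun x =>
    ⟨‖f (R • (x : E))‖⁻¹ • f (R • (x : E)), by
      rw [mem_sphere_zero_iff_norm, norm_smul, norm_inv, norm_norm,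
        inv_mul_cancel₀ (hgne x)]⟩ with hgdef
  set f₁ : E → F := fun v => (1 + max 0 (‖v‖ - R)) • f ((R / max R ‖v‖) • v) with hf₁
  set f₂ : E → F := fun v => ‖v‖ • f ((R / ‖v‖) • v) with hf₂
  -- ================= Stage 1 : f ≃ f₁ =================
  have ph1 : ProperlyHomotopic n k f f₁ := by
    set H : unitInterval × E → F := fun p =>
      (1 + (p.1 : ℝ) * max 0 (‖p.2‖ - R)) •
        f (p.2 - (((p.1 : ℝ) * max 0 (‖p.2‖ - R)) / ‖p.2‖) • p.2) with hH
    have hcoef : Continuous fun p : unitInterval × E =>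
        1 + (p.1 : ℝ) * max 0 (‖p.2‖ - R) :=
      continuous_const.add ((continuous_subtype_val.comp continuous_fst).mul
        (continuous_const.max (continuous_snd.norm.sub continuous_const)))
    have he : Continuous fun p : unitInterval × E =>
        ((p.1 : ℝ) * max 0 (‖p.2‖ - R)) / ‖p.2‖ := by
      rw [continuous_iff_continuousAt]
      intro p
      by_cases hp : ‖p.2‖ < R
      · have hev : (fun _ : unitInterval × E => (0 : ℝ)) =ᶠ[nhds p]
            fun q : unitInterval × E => ((q.1 : ℝ) * max 0 (‖q.2‖ - R)) / ‖q.2‖ := by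
          have hop : IsOpen {q : unitInterval × E | ‖q.2‖ < R} :=
            isOpen_lt continuous_snd.norm continuous_const
          filter_upwards [hop.mem_nhds hp] with q hq
          rw [max_eq_left (by have : ‖q.2‖ < R := hq; linarith), mul_zero, zero_div]
        exact continuousAt_const.congr hev
      · push_neg at hp
        have hne : ‖p.2‖ ≠ 0 := ne_of_gt (lt_of_lt_of_le hRpos hp)
        exact ContinuousAt.div
          (((continuous_subtype_val.comp continuous_fst).mul
            (continuous_const.max (continuous_snd.norm.sub continuous_const))).continuousAt)
          continuous_snd.norm.continuousAt hne
    have hHc : Continuous H :=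
      hcoef.smul (hf.comp (continuous_snd.sub (he.smul continuous_snd)))
    refine ⟨H, hHc, ?_, ?_, ?_⟩
    · apply proper_escape hHc
      intro r
      set r' : ℝ := max r 1 with hr'
      obtain ⟨S₀, hS₀⟩ := hfr r'
      refine ⟨max (max S₀ R + r') R + 1, fun t v hs => ?_⟩
      have hsR : R < ‖v‖ := by
        have := le_max_right (max S₀ R + r') R
        linarith
      have hs0 : (0:ℝ) < ‖v‖ := lt_trans hRpos hsR
      have hmax : max 0 (‖v‖ - R) = ‖v‖ - R := max_eq_right (by linarith)
      have hτ0 : 0 ≤ (t:ℝ) := t.2.1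
      have hτ1 : (t:ℝ) ≤ 1 := t.2.2
      set c : ℝ := (t:ℝ) * (‖v‖ - R) with hc
      have hc0 : 0 ≤ c := mul_nonneg hτ0 (by linarith)
      have hcle : c ≤ ‖v‖ - R := by rw [hc]; nlinarith
      have hdivle : c / ‖v‖ ≤ 1 := by
        rw [div_le_one hs0]; linarith
      have hargval : v - (((t:ℝ) * max 0 (‖v‖ - R)) / ‖v‖) • v = (1 - c / ‖v‖) • v := by
        rw [hmax, ← hc, smul_sub_form]
      have hargnorm : ‖v - (((t:ℝ) * max 0 (‖v‖ - R)) / ‖v‖) • v‖ = ‖v‖ - c := by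
        rw [hargval, norm_smul, Real.norm_eq_abs, abs_of_nonneg (by linarith)]
        field_simp
      have hHnorm : ‖H (t, v)‖ =
          (1 + c) * ‖f (v - (((t:ℝ) * max 0 (‖v‖ - R)) / ‖v‖) • v)‖ := by
        rw [hH]
        simp only
        rw [norm_smul, Real.norm_eq_abs, hmax, ← hc, abs_of_nonneg (by linarith)]
      have hargR : R ≤ ‖v - (((t:ℝ) * max 0 (‖v‖ - R)) / ‖v‖) • v‖ := by
        rw [hargnorm]; linarith
      have hfgt1 : 1 < ‖f (v - (((t:ℝ) * max 0 (‖v‖ - R)) / ‖v‖) • v)‖ := hR _ hargR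
      have hrr' : r ≤ r' := le_max_left r 1
      rcases le_or_gt c r' with hcase | hcase
      · have hSarg : S₀ ≤ ‖v - (((t:ℝ) * max 0 (‖v‖ - R)) / ‖v‖) • v‖ := by
          rw [hargnorm]
          have h1 := le_max_left (max S₀ R + r') R
          have h2 := le_max_left S₀ R
          linarith
        have hfb : r' < ‖f (v - (((t:ℝ) * max 0 (‖v‖ - R)) / ‖v‖) • v)‖ := hS₀ _ hSarg
        rw [hHnorm]
        have hX0 : (0:ℝ) ≤ ‖f (v - (((t:ℝ) * max 0 (‖v‖ - R)) / ‖v‖) • v)‖ := norm_nonneg _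
        have h1 : ‖f (v - (((t:ℝ) * max 0 (‖v‖ - R)) / ‖v‖) • v)‖ ≤
            (1 + c) * ‖f (v - (((t:ℝ) * max 0 (‖v‖ - R)) / ‖v‖) • v)‖ :=
          le_mul_of_one_le_left hX0 (by linarith)
        linarith
      · rw [hHnorm]
        have h1 : (1 + c) ≤ (1 + c) * ‖f (v - (((t:ℝ) * max 0 (‖v‖ - R)) / ‖v‖) • v)‖ :=
          le_mul_of_one_le_right (by linarith) (le_of_lt hfgt1)
        linarith
    · intro v
      rw [hH]
      norm_num
    · intro v
      rw [hH, hf₁]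
      simp only [Set.Icc.coe_one, one_mul]
      congr 1
      exact congrArg f (argEq hRpos v)
  -- ================= Stage 2 : f₁ ≃ f₂ =================
  have ph2 : ProperlyHomotopic n k f₁ f₂ := by
    set H : unitInterval × E → F := fun p =>
      ((1 - (p.1 : ℝ)) + max 0 (‖p.2‖ - (1 - (p.1 : ℝ)) * R)) •
        f ((R / max ((1 - (p.1 : ℝ)) * R) ‖p.2‖) • p.2) with hH
    have hcoefc : Continuous fun p : unitInterval × E =>
        (1 - (p.1 : ℝ)) + max 0 (‖p.2‖ - (1 - (p.1 : ℝ)) * R) :=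
      (continuous_const.sub (continuous_subtype_val.comp continuous_fst)).add
        (continuous_const.max (continuous_snd.norm.sub
          ((continuous_const.sub (continuous_subtype_val.comp continuous_fst)).mul
            continuous_const)))
    have hargle : ∀ p : unitInterval × E,
        ‖((R / max ((1 - (p.1 : ℝ)) * R) ‖p.2‖) • p.2 : E)‖ ≤ R := by
      rintro ⟨t, v⟩
      rcases eq_or_ne v 0 with hv | hv
      · simp [hv, hRpos.le]
      · have hs0 : (0:ℝ) < ‖v‖ := norm_pos_iff.mpr hv
        have hm : (0:ℝ) < max ((1 - (t:ℝ)) * R) ‖v‖ :=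
          lt_of_lt_of_le hs0 (le_max_right _ _)
        rw [norm_smul, Real.norm_eq_abs, abs_of_nonneg (by positivity)]
        rw [div_mul_eq_mul_div, div_le_iff₀ hm]
        have : ‖v‖ ≤ max ((1 - (t:ℝ)) * R) ‖v‖ := le_max_right _ _
        nlinarith
    have hcoefnn : ∀ p : unitInterval × E,
        0 ≤ (1 - (p.1 : ℝ)) + max 0 (‖p.2‖ - (1 - (p.1 : ℝ)) * R) := by
      rintro ⟨t, v⟩
      have := t.2.2
      have := le_max_left (0:ℝ) (‖v‖ - (1 - (t:ℝ)) * R)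
      simp only
      linarith
    have hHnorm : ∀ p : unitInterval × E, ‖H p‖ ≤
        ((1 - (p.1 : ℝ)) + max 0 (‖p.2‖ - (1 - (p.1 : ℝ)) * R)) * M := by
      intro p
      rw [hH]
      simp only
      rw [norm_smul, Real.norm_eq_abs, abs_of_nonneg (hcoefnn p)]
      exact mul_le_mul_of_nonneg_left (hM _ (hargle p)) (hcoefnn p)
    have hHc : Continuous H := by
      rw [continuous_iff_continuousAt]
      rintro ⟨t, v⟩
      by_cases hcrit : (t : ℝ) = 1 ∧ v = 0
      · -- squeeze at the critical point
        obtain ⟨ht, hv⟩ := hcrit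
        subst hv
        have hval : H (t, 0) = 0 := by
          rw [hH]
          simp only [norm_zero, ht]
          norm_num
        rw [ContinuousAt, hval]
        apply squeeze_zero_norm hHnorm
        have hcont : Continuous fun p : unitInterval × E =>
            ((1 - (p.1 : ℝ)) + max 0 (‖p.2‖ - (1 - (p.1 : ℝ)) * R)) * M :=
          hcoefc.mul continuous_const
        have := hcont.tendsto (t, 0)
        simp only [norm_zero, ht] at this
        norm_num at this
        exact this
      · -- denominator is nonzero near p
        have hm : (0:ℝ) < max ((1 - (t:ℝ)) * R) ‖v‖ := by
          rcases not_and_or.mp hcrit with h | h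
          · have h1 : (t:ℝ) < 1 := lt_of_le_of_ne t.2.2 h
            exact lt_of_lt_of_le (by nlinarith) (le_max_left _ _)
          · exact lt_of_lt_of_le (norm_pos_iff.mpr h) (le_max_right _ _)
        have harg : ContinuousAt (fun p : unitInterval × E =>
            ((R / max ((1 - (p.1 : ℝ)) * R) ‖p.2‖) • p.2 : E)) (t, v) := by
          apply ContinuousAt.fun_smul
          · exact ContinuousAt.div continuousAt_const
              (((continuous_const.sub (continuous_subtype_val.comp continuous_fst)).mul
                continuous_const).max continuous_snd.norm).continuousAt hm.ne'
          · exact continuous_snd.continuousAt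
        exact (hcoefc.continuousAt).smul ((hf.continuousAt).comp harg)
    refine ⟨H, hHc, ?_, ?_, ?_⟩
    · apply proper_escape hHc
      intro r
      refine ⟨R + max r 0 + 1, fun t v hs => ?_⟩
      have hτ0 : 0 ≤ (t:ℝ) := t.2.1
      have hτ1 : (t:ℝ) ≤ 1 := t.2.2
      have hr0 := le_max_right r 0
      have hrr := le_max_left r 0
      have htR : (1 - (t:ℝ)) * R ≤ R := by nlinarith
      have hsR : R < ‖v‖ := by linarith
      have hs0 : (0:ℝ) < ‖v‖ := lt_trans hRpos hsR
      have hmax : max ((1 - (t:ℝ)) * R) ‖v‖ = ‖v‖ := max_eq_right (by linarith)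
      have hargnorm : ‖((R / max ((1 - (t:ℝ)) * R) ‖v‖) • v : E)‖ = R := by
        rw [hmax, norm_smul, Real.norm_eq_abs, abs_of_nonneg (by positivity)]
        field_simp
      have hfgt : 1 < ‖f ((R / max ((1 - (t:ℝ)) * R) ‖v‖) • v)‖ :=
        hR _ (le_of_eq hargnorm.symm)
      have hco : ‖v‖ - R ≤ (1 - (t:ℝ)) + max 0 (‖v‖ - (1 - (t:ℝ)) * R) := by
        have h1 : ‖v‖ - (1 - (t:ℝ)) * R ≤ max 0 (‖v‖ - (1 - (t:ℝ)) * R) := le_max_right _ _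
        nlinarith
      have hHval : ‖H (t, v)‖ = ((1 - (t:ℝ)) + max 0 (‖v‖ - (1 - (t:ℝ)) * R)) *
          ‖f ((R / max ((1 - (t:ℝ)) * R) ‖v‖) • v)‖ := by
        rw [hH]
        simp only
        rw [norm_smul, Real.norm_eq_abs, abs_of_nonneg (hcoefnn (t, v))]
      rw [hHval]
      have hcn := hcoefnn (t, v)
      simp only at hcn
      have h1 : ((1 - (t:ℝ)) + max 0 (‖v‖ - (1 - (t:ℝ)) * R)) ≤
          ((1 - (t:ℝ)) + max 0 (‖v‖ - (1 - (t:ℝ)) * R)) *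
            ‖f ((R / max ((1 - (t:ℝ)) * R) ‖v‖) • v)‖ :=
        le_mul_of_one_le_right hcn (le_of_lt hfgt)
      linarith
    · intro v
      rw [hH, hf₁]
      norm_num
    · intro v
      rw [hH, hf₂]
      simp only [Set.Icc.coe_one, sub_self, zero_mul, zero_add, sub_zero]
      rw [max_eq_right (norm_nonneg v)]
  -- ================= Stage 3 : f₂ ≃ radialExt g =================
  have hWnorm : ∀ v : E, v ≠ 0 → ‖((R / ‖v‖) • v : E)‖ = R := by
    intro v hv
    have hs0 : (0:ℝ) < ‖v‖ := norm_pos_iff.mpr hv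
    rw [norm_smul, Real.norm_eq_abs, abs_of_nonneg (by positivity)]
    field_simp
  have ph3 : ProperlyHomotopic n k f₂ (radialExt n k g) := by
    set H : unitInterval × E → F := fun p =>
      (‖p.2‖ * ((1 - (p.1 : ℝ)) + (p.1 : ℝ) * ‖f ((R / ‖p.2‖) • p.2)‖⁻¹)) •
        f ((R / ‖p.2‖) • p.2) with hH
    have hfWgt : ∀ v : E, v ≠ 0 → 1 < ‖f ((R / ‖v‖) • v)‖ := fun v hv =>
      hR _ (le_of_eq (hWnorm v hv).symm)
    have hbound : ∀ p : unitInterval × E, ‖H p‖ ≤ ‖p.2‖ * M := by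
      rintro ⟨t, v⟩
      rcases eq_or_ne v 0 with hv | hv
      · rw [hH]; simp [hv]
      · have hu1 : 1 < ‖f ((R / ‖v‖) • v)‖ := hfWgt v hv
        have hτ0 : 0 ≤ (t:ℝ) := t.2.1
        have hτ1 : (t:ℝ) ≤ 1 := t.2.2
        have huinv : ‖f ((R / ‖v‖) • v)‖⁻¹ ≤ 1 := by
          rw [inv_le_one_iff₀]; right; linarith
        have huinv0 : 0 ≤ ‖f ((R / ‖v‖) • v)‖⁻¹ := by positivity
        have hfac : 0 ≤ (1 - (t:ℝ)) + (t:ℝ) * ‖f ((R / ‖v‖) • v)‖⁻¹ := by nlinarith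
        have hfac1 : (1 - (t:ℝ)) + (t:ℝ) * ‖f ((R / ‖v‖) • v)‖⁻¹ ≤ 1 := by nlinarith
        have hfM : ‖f ((R / ‖v‖) • v)‖ ≤ M := hM _ (le_of_eq (hWnorm v hv))
        rw [hH]
        simp only
        rw [norm_smul, Real.norm_eq_abs, abs_of_nonneg (by positivity), mul_assoc]
        have h0f : 0 ≤ ‖f ((R / ‖v‖) • v)‖ := norm_nonneg _
        have h1 : ((1 - (t:ℝ)) + (t:ℝ) * ‖f ((R / ‖v‖) • v)‖⁻¹) * ‖f ((R / ‖v‖) • v)‖ ≤ M := by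
          nlinarith
        exact mul_le_mul_of_nonneg_left h1 (norm_nonneg v)
    have hHc : Continuous H := by
      rw [continuous_iff_continuousAt]
      rintro ⟨t, v⟩
      rcases eq_or_ne v 0 with hv | hv
      · subst hv
        have hval : H (t, 0) = 0 := by rw [hH]; simp
        rw [ContinuousAt, hval]
        apply squeeze_zero_norm hbound
        have : Continuous fun p : unitInterval × E => ‖p.2‖ * M :=
          continuous_snd.norm.mul continuous_const
        have := this.tendsto (t, (0:E))
        simpa using this
      · have hs0 : (0:ℝ) < ‖v‖ := norm_pos_iff.mpr hv
        have hWc : ContinuousAt (fun p : unitInterval × E => ((R / ‖p.2‖) • p.2 : E))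
            (t, v) := by
          apply ContinuousAt.fun_smul
          · exact ContinuousAt.div continuousAt_const continuous_snd.norm.continuousAt hs0.ne'
          · exact continuous_snd.continuousAt
        have hfWc : ContinuousAt (fun p : unitInterval × E => f ((R / ‖p.2‖) • p.2))
            (t, v) := hf.continuousAt.comp hWc
        have hinv : ContinuousAt (fun p : unitInterval × E =>
            ‖f ((R / ‖p.2‖) • p.2)‖⁻¹) (t, v) := by
          apply ContinuousAt.inv₀ hfWc.norm
          exact ne_of_gt (lt_trans zero_lt_one (hfWgt v hv))
        apply ContinuousAt.fun_smul _ hfWc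
        exact (continuous_snd.norm.continuousAt).mul
          (((continuous_const.sub (continuous_subtype_val.comp continuous_fst)).continuousAt).add
            (((continuous_subtype_val.comp continuous_fst).continuousAt).mul hinv))
    refine ⟨H, hHc, ?_, ?_, ?_⟩
    · apply proper_escape hHc
      intro r
      refine ⟨max r 0 + 1, fun t v hs => ?_⟩
      have hs0 : (0:ℝ) < ‖v‖ := by
        have := le_max_right r 0
        linarith
      have hv : v ≠ 0 := norm_pos_iff.mp hs0
      have hu1 : 1 < ‖f ((R / ‖v‖) • v)‖ := hfWgt v hv
      have hu0 : (0:ℝ) < ‖f ((R / ‖v‖) • v)‖ := lt_trans zero_lt_one hu1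
      have hτ0 : 0 ≤ (t:ℝ) := t.2.1
      have hτ1 : (t:ℝ) ≤ 1 := t.2.2
      have huinv : ‖f ((R / ‖v‖) • v)‖⁻¹ * ‖f ((R / ‖v‖) • v)‖ = 1 :=
        inv_mul_cancel₀ hu0.ne'
      have hfac : 0 ≤ (1 - (t:ℝ)) + (t:ℝ) * ‖f ((R / ‖v‖) • v)‖⁻¹ := by
        have : 0 ≤ ‖f ((R / ‖v‖) • v)‖⁻¹ := by positivity
        nlinarith
      have hHval : ‖H (t, v)‖ =
          ‖v‖ * (((1 - (t:ℝ)) + (t:ℝ) * ‖f ((R / ‖v‖) • v)‖⁻¹) * ‖f ((R / ‖v‖) • v)‖) := by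
        rw [hH]
        simp only
        rw [norm_smul, Real.norm_eq_abs, abs_of_nonneg (by positivity), mul_assoc]
      rw [hHval]
      have hkey : ((1 - (t:ℝ)) + (t:ℝ) * ‖f ((R / ‖v‖) • v)‖⁻¹) * ‖f ((R / ‖v‖) • v)‖
          = (1 - (t:ℝ)) * ‖f ((R / ‖v‖) • v)‖ + (t:ℝ) := by
        rw [add_mul, mul_assoc, huinv, mul_one]
      rw [hkey]
      have : 1 ≤ (1 - (t:ℝ)) * ‖f ((R / ‖v‖) • v)‖ + (t:ℝ) := by nlinarith
      have hrle := le_max_left r 0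
      nlinarith
    · intro v
      rw [hH, hf₂]
      norm_num
    · intro v
      rw [hH]
      simp only [Set.Icc.coe_one, sub_self, zero_add, one_mul]
      rcases eq_or_ne v 0 with hv | hv
      · rw [hv]
        unfold radialExt
        rw [dif_pos rfl]
        simp
      · have hs0 : (0:ℝ) < ‖v‖ := norm_pos_iff.mpr hv
        unfold radialExt
        rw [dif_neg hv, hgdef]
        simp only
        have hRv : R • (‖v‖⁻¹ • v) = (R / ‖v‖) • v := by
          rw [smul_smul, div_eq_mul_inv]
        rw [hRv, smul_smul]
  -- assemble
  exact ((ph3.symm'.trans' ph2.symm').trans' ph1.symm')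

end Part4

/-- The assignment `g ↦ Pg` induces a bijection from homotopy classes of maps
`S^{n-1} → S^{k-1}` to proper homotopy classes of proper maps `ℝⁿ → ℝᵏ`:
it lands in proper maps, is well defined, injective and surjective on classes. -/
theorem stmt_11 (n k : ℕ) :
    (∀ g : Metric.sphere (0 : EuclideanSpace ℝ (Fin n)) 1 →
           Metric.sphere (0 : EuclideanSpace ℝ (Fin k)) 1, Continuous g →
      Continuous (radialExt n k g) ∧
        ∀ K : Set (EuclideanSpace ℝ (Fin k)), IsCompact K →
          IsCompact (radialExt n k g ⁻¹' K)) ∧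
    (∀ g₀ g₁, Continuous g₀ → Continuous g₁ → SphereHomotopic n k g₀ g₁ →
      ProperlyHomotopic n k (radialExt n k g₀) (radialExt n k g₁)) ∧
    (∀ g₀ g₁, Continuous g₀ → Continuous g₁ →
      ProperlyHomotopic n k (radialExt n k g₀) (radialExt n k g₁) →
      SphereHomotopic n k g₀ g₁) ∧
    (∀ f : EuclideanSpace ℝ (Fin n) → EuclideanSpace ℝ (Fin k), Continuous f →
      (∀ K : Set (EuclideanSpace ℝ (Fin k)), IsCompact K → IsCompact (f ⁻¹' K)) →
      ∃ g, Continuous g ∧ ProperlyHomotopic n k (radialExt n k g) f) := by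
  refine ⟨?_, ?_, ?_, ?_⟩
  · intro g hg
    exact ⟨radialExt_continuous g hg, radialExt_proper g hg⟩
  · intro g₀ g₁ _ _ h
    exact part2 g₀ g₁ h
  · intro g₀ g₁ _ _ h
    exact part3 g₀ g₁ h
  · intro f hf hfp
    exact part4 f hf hfp
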